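/- Let p be a prime with 3 | (p − 1) and ω ∈ F_p a primitive third root of unity. Let C be the cyclic code of length 3p over F_p with generator polynomial g(x) = (x−1)^5 (x−ω)^3 (x−ω^2)^3. Then C has dimension 3p − 11, minimum Hamming distance 6, and minimum symbol-pair distance 12 (so C is an AMDS (3p, 12)_p symbol-pair code). -/

import Mathlib

open Polynomial

/-- Hamming weight of a cyclic word `x : ZMod n → F`. -/
def hammingWt {F : Type*} [Zero F] [DecidableEq F] (n : ℕ) (x : ZMod n → F) : ℕ :=
  ((Finset.range n).filter fun i : ℕ => x (↑i) ≠ 0).card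

/-- Symbol-pair weight of a cyclic word `x : ZMod n → F`. -/
def pairWt {F : Type*} [Zero F] [DecidableEq F] (n : ℕ) (x : ZMod n → F) : ℕ :=
  ((Finset.range n).filter fun i : ℕ =>
    (x (↑i), x (↑i + 1)) ≠ ((0 : F), (0 : F))).card

/-- Symbol-pair distance between two words of length `n`. -/
def pairDist {F : Type*} [DecidableEq F] (n : ℕ) (x y : ZMod n → F) : ℕ :=
  ((Finset.range n).filter fun i : ℕ =>
    (x (↑i), x (↑i + 1)) ≠ (y (↑i), y (↑i + 1))).card

/-- The polynomial associated to a word. -/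
noncomputable def toPoly {F : Type*} [Semiring F] (n : ℕ) (x : ZMod n → F) : F[X] :=
  ∑ i ∈ Finset.range n, Polynomial.C (x (↑i)) * X ^ i

/-- The cyclic code of length `n` with generator polynomial `g`:
a word of length `n` is a codeword iff its associated polynomial
(of degree `< n`) is divisible by `g`. -/
def cyclicCode {F : Type*} [Field F] (n : ℕ) (g : F[X]) : Set (ZMod n → F) :=
  {c | g ∣ toPoly n c}



open Polynomial Finset

lemma coeff_toPoly {F : Type*} [Semiring F] (n : ℕ) (x : ZMod n → F) (j : ℕ) :
    (toPoly n x).coeff j = if j < n then x ↑j else 0 := by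
  unfold toPoly
  rw [finset_sum_coeff]
  simp only [coeff_C_mul, coeff_X_pow, mul_ite, mul_one, mul_zero]
  rw [Finset.sum_ite_eq (Finset.range n) j (fun i => x ↑i)]
  simp [Finset.mem_range]

lemma degree_toPoly_lt {F : Type*} [Semiring F] {n : ℕ} (hn : 0 < n) (x : ZMod n → F) :
    (toPoly n x).degree < n := by
  rw [degree_lt_iff_coeff_zero]
  intro m hm
  rw [coeff_toPoly]
  rw [if_neg (by exact_mod_cast not_lt.2 (by exact_mod_cast hm))]

lemma toPoly_ofCoeff {F : Type*} [Semiring F] {n : ℕ} [NeZero n] {Q : F[X]}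
    (hQ : Q.degree < n) : toPoly n (fun i => Q.coeff i.val) = Q := by
  ext j
  rw [coeff_toPoly]
  split_ifs with h
  · rw [ZMod.val_natCast, Nat.mod_eq_of_lt h]
  · exact (coeff_eq_zero_of_degree_lt (lt_of_lt_of_le hQ (by exact_mod_cast not_lt.1 h))).symm

/-- Hasse-derivative root conditions. -/
lemma hasse_sum_eq_zero {F : Type*} [CommRing F] {P : F[X]} {α : F} {m j n : ℕ}
    (hd : (X - C α) ^ m ∣ P) (hj : j < m) (hP : P.natDegree < n) :
    ∑ i ∈ range n, P.coeff i * (i.choose j : F) * α ^ i = 0 := by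
  have hT : X ^ m ∣ taylor α P := by
    obtain ⟨h, rfl⟩ := hd
    have hth : taylor α ((X - C α) ^ m * h) = X ^ m * taylor α h := by
      have h1 : taylor α (X - C α) = X := by
        rw [map_sub, taylor_X, taylor_C]; ring
      show taylorAlgHom α _ = _
      rw [map_mul, map_pow]
      show (taylor α (X - C α)) ^ m * taylor α h = _
      rw [h1]
    rw [hth]
    exact Dvd.intro _ rfl
  have h0 : (hasseDeriv j P).eval α = 0 := by
    rw [← taylor_coeff]
    exact X_pow_dvd_iff.1 hT j hj
  have hexp : α ^ j * (hasseDeriv j P).eval α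
      = ∑ i ∈ range n, P.coeff i * (i.choose j : F) * α ^ i := by
    conv_lhs => rw [P.as_sum_range' n hP]
    rw [map_sum, eval_finset_sum, Finset.mul_sum]
    refine Finset.sum_congr rfl fun i _ => ?_
    rw [hasseDeriv_monomial, eval_monomial]
    rcases lt_or_ge i j with h | h
    · rw [Nat.choose_eq_zero_of_lt h]
      simp
    · rw [mul_comm (α ^ j), mul_assoc, ← pow_add, Nat.sub_add_cancel h]
      ring
  rw [h0, mul_zero] at hexp
  exact hexp.symm

lemma sum_eval_eq_zero {F : Type*} [Field F] {s : Finset ℕ} {c : ℕ → F} {v : ℕ → F} {m : ℕ}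
    (h : ∀ j < m, ∑ i ∈ s, c i * (descPochhammer F j).eval (v i) = 0) :
    ∀ q : F[X], q.natDegree < m → ∑ i ∈ s, c i * q.eval (v i) = 0 := by
  suffices H : ∀ d, ∀ q : F[X], q.natDegree ≤ d → d < m → ∑ i ∈ s, c i * q.eval (v i) = 0 by
    intro q hq; exact H q.natDegree q le_rfl hq
  intro d
  induction d with
  | zero =>
    intro q hq hm
    obtain ⟨a, rfl⟩ := Polynomial.natDegree_eq_zero.1 (Nat.le_zero.1 hq)
    have h0 := h 0 hm
    simp only [descPochhammer_zero, eval_one, mul_one] at h0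
    simp only [eval_C, ← Finset.sum_mul, h0, zero_mul]
  | succ d ih =>
    intro q hq hm
    set a := q.coeff (d + 1) with ha
    have hpoch : (descPochhammer F (d + 1)).natDegree = d + 1 :=
      descPochhammer_natDegree (R := F) _
    have hmon : (descPochhammer F (d + 1)).Monic := monic_descPochhammer _ _
    set q' : F[X] := q - C a * descPochhammer F (d + 1) with hq'
    have hdeg : q'.natDegree ≤ d := by
      rw [Polynomial.natDegree_le_iff_coeff_eq_zero]
      intro k hk
      rw [hq', Polynomial.coeff_sub, coeff_C_mul]
      rcases eq_or_lt_of_le (Nat.succ_le_of_lt hk) with h1 | h1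
      · rw [← h1, ← ha]
        have : (descPochhammer F (d + 1)).coeff (d + 1) = 1 := by
          have h2 := hmon.coeff_natDegree
          rwa [hpoch] at h2
        rw [this, mul_one, sub_self]
      · rw [Polynomial.coeff_eq_zero_of_natDegree_lt (lt_of_le_of_lt hq h1),
          Polynomial.coeff_eq_zero_of_natDegree_lt (by rw [hpoch]; exact h1), mul_zero, sub_self]
    have hrec := ih q' hdeg (lt_of_le_of_lt (Nat.le_succ d) hm)
    have hpo := h (d + 1) hm
    calc ∑ i ∈ s, c i * q.eval (v i)
        = ∑ i ∈ s, (c i * q'.eval (v i) + a * (c i * (descPochhammer F (d + 1)).eval (v i))) := by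
          refine Finset.sum_congr rfl fun i _ => ?_
          rw [hq']; simp [eval_sub, eval_mul]; ring
      _ = 0 := by
          rw [Finset.sum_add_distrib, hrec, ← Finset.mul_sum, hpo, mul_zero, add_zero]

lemma eq_zero_of_small_support {F : Type*} [Field F] {s : Finset ℕ} {c : ℕ → F} {v : ℕ → F}
    {m : ℕ} (hcard : s.card ≤ m)
    (hv : ∀ i ∈ s, ∀ i' ∈ s, i ≠ i' → v i ≠ v i')
    (h : ∀ q : F[X], q.natDegree < m → ∑ i ∈ s, c i * q.eval (v i) = 0) :
    ∀ i ∈ s, c i = 0 := by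
  intro i0 hi0
  set q : F[X] := ∏ i' ∈ s.erase i0, (X - C (v i')) with hqdef
  have hqdeg : q.natDegree < m := by
    have h1 : q.natDegree = (s.erase i0).card := by
      rw [hqdef, Polynomial.natDegree_prod _ _ (fun i _ => X_sub_C_ne_zero (v i))]
      simp
    rw [h1, Finset.card_erase_of_mem hi0]
    have : 1 ≤ s.card := Finset.card_pos.2 ⟨i0, hi0⟩
    omega
  have hsum := h q hqdeg
  rw [Finset.sum_eq_single_of_mem i0 hi0 (fun i hi hne => ?_)] at hsum
  · have hne : q.eval (v i0) ≠ 0 := by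
      rw [hqdef, eval_prod]
      refine Finset.prod_ne_zero_iff.2 fun i' hi' => ?_
      rw [eval_sub, eval_X, eval_C, sub_ne_zero]
      exact hv i0 hi0 i' (Finset.mem_of_mem_erase hi') (fun hh => (Finset.ne_of_mem_erase hi') hh.symm)
    exact (mul_eq_zero.1 hsum).resolve_right hne
  · rw [hqdef, eval_prod]
    rw [Finset.prod_eq_zero (Finset.mem_erase.2 ⟨hne, hi⟩)]
    · rw [mul_zero]
    · rw [eval_sub, eval_X, eval_C, sub_self]

lemma class_sum_eq_zero {F : Type*} [Field F] {ω : F}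
    (hω3 : ω ^ 3 = 1) (hsum : 1 + ω + ω ^ 2 = 0) (h3 : (3 : F) ≠ 0)
    {n : ℕ} {f : ℕ → F}
    (hα : ∀ α : F, α ^ 3 = 1 → ∑ i ∈ range n, f i * α ^ i = 0) :
    ∀ r, ∑ i ∈ (range n).filter (fun i => i % 3 = r), f i = 0 := by
  have key : ∀ α : F, α ^ 3 = 1 →
      (∑ i ∈ (range n).filter (fun i => i % 3 = 0), f i)
      + (∑ i ∈ (range n).filter (fun i => i % 3 = 1), f i) * α
      + (∑ i ∈ (range n).filter (fun i => i % 3 = 2), f i) * α ^ 2 = 0 := by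
    intro α hα3
    have h1 : ∑ r ∈ range 3, ∑ i ∈ (range n).filter (fun i => i % 3 = r), f i * α ^ i
        = ∑ i ∈ range n, f i * α ^ i := by
      rw [Finset.sum_fiberwise_eq_sum_filter]
      congr 1
      apply Finset.filter_true_of_mem
      exact fun i _ => Finset.mem_range.2 (Nat.mod_lt _ (by norm_num))
    have h2 : ∀ r, ∑ i ∈ (range n).filter (fun i => i % 3 = r), f i * α ^ i
        = (∑ i ∈ (range n).filter (fun i => i % 3 = r), f i) * α ^ r := by
      intro r
      rw [Finset.sum_mul]
      refine Finset.sum_congr rfl fun i hi => ?_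
      obtain ⟨-, hir⟩ := Finset.mem_filter.1 hi
      have hpw : α ^ i = α ^ r := by
        conv_lhs => rw [show i = 3 * (i / 3) + r by omega]
        rw [pow_add, pow_mul, hα3, one_pow, one_mul]
      rw [hpw]
    rw [hα α hα3] at h1
    rw [Finset.sum_range_succ, Finset.sum_range_succ, Finset.sum_range_one, h2 0, h2 1, h2 2] at h1
    rw [← h1]; ring
  intro r
  set T0 := ∑ i ∈ (range n).filter (fun i => i % 3 = 0), f i with hT0
  set T1 := ∑ i ∈ (range n).filter (fun i => i % 3 = 1), f i with hT1
  set T2 := ∑ i ∈ (range n).filter (fun i => i % 3 = 2), f i with hT2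
  have e1 := key 1 (one_pow 3)
  have e2 := key ω hω3
  have e3 := key (ω ^ 2) (by rw [show (ω ^ 2) ^ 3 = (ω ^ 3) ^ 2 by ring, hω3, one_pow])
  match r with
  | 0 =>
    have h30 : (3 : F) * T0 = 0 := by linear_combination e1 + e2 + e3 - (T1 + T2) * hsum - ω * T2 * hω3
    exact (mul_eq_zero.1 h30).resolve_left h3
  | 1 =>
    have h31 : (3 : F) * T1 = 0 := by
      linear_combination e1 + ω ^ 2 * e2 + ω * e3 - (T0 + T2) * hsum - (2 * T1 + (ω + ω ^ 2) * T2) * hω3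
    exact (mul_eq_zero.1 h31).resolve_left h3
  | 2 =>
    have h32 : (3 : F) * T2 = 0 := by
      linear_combination e1 + ω * e2 + ω ^ 2 * e3 - (T0 + T1) * hsum - (ω * T1 + (ω ^ 3 + 2) * T2) * hω3
    exact (mul_eq_zero.1 h32).resolve_left h3
  | (r + 3) =>
    rw [Finset.filter_false_of_mem, Finset.sum_empty]
    intro i _
    omega

lemma natDegree_toPoly_lt {F : Type*} [Semiring F] {n : ℕ} (hn : 0 < n) (x : ZMod n → F) :
    (toPoly n x).natDegree < n := by
  by_cases h : toPoly n x = 0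
  · rw [h]; simpa using hn
  · have := degree_toPoly_lt hn x
    rwa [Polynomial.degree_eq_natDegree h, Nat.cast_lt] at this

/-- root-condition sums with descFactorial weights -/
lemma descF_sum {F : Type*} [Field F] {n : ℕ} (hn : 0 < n) {c : ZMod n → F} {α : F} {m j : ℕ}
    (hd : (X - C α) ^ m ∣ toPoly n c) (hj : j < m) :
    ∑ i ∈ Finset.range n, (fun i : ℕ => c ↑i * ((i.descFactorial j : ℕ) : F)) i * α ^ i = 0 := by
  have h := hasse_sum_eq_zero hd hj (natDegree_toPoly_lt hn c)
  have h2 : ∑ i ∈ Finset.range n, (fun i : ℕ => c ↑i * ((i.descFactorial j : ℕ) : F)) i * α ^ i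
      = (j.factorial : F) * ∑ i ∈ Finset.range n, (toPoly n c).coeff i * (i.choose j : F) * α ^ i := by
    rw [Finset.mul_sum]
    refine Finset.sum_congr rfl fun i hi => ?_
    rw [coeff_toPoly, if_pos (Finset.mem_range.1 hi)]
    simp only [Nat.descFactorial_eq_factorial_mul_choose, Nat.cast_mul]
    ring
  rw [h2, h, mul_zero]

lemma cube_roots_mem {F : Type*} [Field F] {ω α : F}
    (hω3 : ω ^ 3 = 1) (hωsum : 1 + ω + ω ^ 2 = 0) (hα : α ^ 3 = 1) :
    α = 1 ∨ α = ω ∨ α = ω ^ 2 := by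
  have hfac : (α - 1) * (α - ω) * (α - ω ^ 2) = 0 := by
    linear_combination hα + (α - α ^ 2) * hωsum + (α - 1) * hω3
  rcases mul_eq_zero.1 hfac with h | h
  · rcases mul_eq_zero.1 h with h | h
    · exact Or.inl (sub_eq_zero.1 h)
    · exact Or.inr (Or.inl (sub_eq_zero.1 h))
  · exact Or.inr (Or.inr (sub_eq_zero.1 h))

lemma cast_ne_cast {p : ℕ} [hp : Fact p.Prime] (hp3 : p ≠ 3) {i i' : ℕ}
    (hi : i < 3 * p) (hi' : i' < 3 * p) (h3 : i % 3 = i' % 3) (hne : i ≠ i') :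
    (i : ZMod p) ≠ (i' : ZMod p) := by
  intro h
  have hmp : i ≡ i' [MOD p] := (ZMod.natCast_eq_natCast_iff _ _ _).1 h
  have hm3 : i ≡ i' [MOD 3] := by unfold Nat.ModEq; omega
  have hco : Nat.Coprime 3 p := (Nat.coprime_primes (by norm_num) hp.out).2 (fun hh => hp3 hh.symm)
  have hmul : i ≡ i' [MOD 3 * p] := (Nat.modEq_and_modEq_iff_modEq_mul hco).1 ⟨hm3, hmp⟩
  have : i % (3 * p) = i' % (3 * p) := hmul
  rw [Nat.mod_eq_of_lt hi, Nat.mod_eq_of_lt hi'] at this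
  exact hne this

section Main
variable {p : ℕ} [hp : Fact p.Prime] {ω : ZMod p} {c : ZMod (3 * p) → ZMod p}

/-- kill a small class -/
lemma class_card_ge (hp3 : p ≠ 3) (hω3 : ω ^ 3 = 1) (hωsum : 1 + ω + ω ^ 2 = 0)
    (h3F : (3 : ZMod p) ≠ 0)
    (h1 : (X - C 1) ^ 5 ∣ toPoly (3 * p) c)
    (hw : (X - C ω) ^ 3 ∣ toPoly (3 * p) c)
    (hw2 : (X - C (ω ^ 2)) ^ 3 ∣ toPoly (3 * p) c) (r : ℕ)
    (hne : ((Finset.range (3 * p)).filter (fun i : ℕ => c ↑i ≠ 0 ∧ i % 3 = r)).Nonempty) :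
    4 ≤ ((Finset.range (3 * p)).filter (fun i : ℕ => c ↑i ≠ 0 ∧ i % 3 = r)).card := by
  have hn : 0 < 3 * p := by have := hp.out.pos; omega
  by_contra hlt
  push_neg at hlt
  set s := (Finset.range (3 * p)).filter (fun i : ℕ => c ↑i ≠ 0 ∧ i % 3 = r) with hs
  have hcls : ∀ j, j < 3 → ∑ i ∈ (Finset.range (3 * p)).filter (fun i : ℕ => i % 3 = r),
      (fun i : ℕ => c ↑i * ((i.descFactorial j : ℕ) : ZMod p)) i = 0 := by
    intro j hj
    refine class_sum_eq_zero hω3 hωsum h3F (fun α hα => ?_) r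
    rcases cube_roots_mem hω3 hωsum hα with rfl | rfl | rfl
    · exact descF_sum hn h1 (by omega)
    · exact descF_sum hn hw hj
    · exact descF_sum hn hw2 hj
  have hsres : ∀ j, j < 3 →
      ∑ i ∈ s, (fun i : ℕ => c (↑i : ZMod (3 * p))) i * (descPochhammer (ZMod p) j).eval ((fun i : ℕ => ((i : ZMod p))) i) = 0 := by
    intro j hj
    have hsub : s ⊆ (Finset.range (3 * p)).filter (fun i : ℕ => i % 3 = r) := by
      intro i hi
      simp only [hs, Finset.mem_filter] at hi ⊢
      exact ⟨hi.1, hi.2.2⟩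
    have hzero : ∀ i ∈ (Finset.range (3 * p)).filter (fun i : ℕ => i % 3 = r), i ∉ s →
        (fun i : ℕ => c ↑i * ((i.descFactorial j : ℕ) : ZMod p)) i = 0 := by
      intro i hi his
      simp only [hs, Finset.mem_filter, not_and] at his hi
      have : c ↑i = 0 := by
        by_contra hcc
        exact his hi.1 hcc hi.2
      simp [this]
    have := Finset.sum_subset hsub hzero
    rw [hcls j hj] at this
    rw [← this]
    refine Finset.sum_congr rfl fun i _ => ?_
    rw [descPochhammer_eval_eq_descFactorial]
  have hall := eq_zero_of_small_support (m := 3) (by omega : s.card ≤ 3)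
    (fun i hi i' hi' hne' => by
      simp only [hs, Finset.mem_filter] at hi hi'
      exact cast_ne_cast hp3 (Finset.mem_range.1 hi.1) (Finset.mem_range.1 hi'.1)
        (hi.2.2.trans hi'.2.2.symm) hne')
    (sum_eval_eq_zero hsres)
  obtain ⟨i, hi⟩ := hne
  have := hall i hi
  simp only [hs, Finset.mem_filter] at hi
  exact hi.2.1 this

end Main

lemma six_le_of_single_class [hp : Fact p.Prime] (hp3 : p ≠ 3)
    (h1 : ((X - C 1 : (ZMod p)[X])) ^ 5 ∣ toPoly (3 * p) c) (r : ℕ)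
    (hall3 : ∀ i ∈ (Finset.range (3 * p)).filter (fun i : ℕ => c ↑i ≠ 0), i % 3 = r)
    (hne : ((Finset.range (3 * p)).filter (fun i : ℕ => c ↑i ≠ 0)).Nonempty) :
    6 ≤ ((Finset.range (3 * p)).filter (fun i : ℕ => c ↑i ≠ 0)).card := by
  have hn : 0 < 3 * p := by have := hp.out.pos; omega
  by_contra hlt
  push_neg at hlt
  set s := (Finset.range (3 * p)).filter (fun i : ℕ => c ↑i ≠ 0) with hs
  have hglob : ∀ j, j < 5 → ∑ i ∈ Finset.range (3 * p),
      (fun i : ℕ => c ↑i * ((i.descFactorial j : ℕ) : ZMod p)) i = 0 := by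
    intro j hj
    have := descF_sum hn h1 hj
    simpa using this
  have hsres : ∀ j, j < 5 →
      ∑ i ∈ s, (fun i : ℕ => c (↑i : ZMod (3 * p))) i
        * (descPochhammer (ZMod p) j).eval ((fun i : ℕ => ((i : ZMod p))) i) = 0 := by
    intro j hj
    have hsub : s ⊆ Finset.range (3 * p) := Finset.filter_subset _ _
    have hzero : ∀ i ∈ Finset.range (3 * p), i ∉ s →
        (fun i : ℕ => c ↑i * ((i.descFactorial j : ℕ) : ZMod p)) i = 0 := by
      intro i hi his
      simp only [hs, Finset.mem_filter, not_and, not_not] at his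
      simp [his hi]
    have := Finset.sum_subset hsub hzero
    rw [hglob j hj] at this
    rw [← this]
    refine Finset.sum_congr rfl fun i _ => ?_
    rw [descPochhammer_eval_eq_descFactorial]
  have hall := eq_zero_of_small_support (m := 5) (by omega : s.card ≤ 5)
    (fun i hi i' hi' hne' =>
      cast_ne_cast hp3 (Finset.mem_range.1 (Finset.mem_filter.1 hi).1)
        (Finset.mem_range.1 (Finset.mem_filter.1 hi').1)
        ((hall3 i hi).trans (hall3 i' hi').symm) hne')
    (sum_eval_eq_zero hsres)
  obtain ⟨i, hi⟩ := hne
  exact (Finset.mem_filter.1 hi).2 (hall i hi)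

lemma weights_ge {p : ℕ} (hppos : 0 < p) {c : ZMod (3 * p) → ZMod p}
    (hA : ∀ r : ℕ, ((range (3 * p)).filter (fun i : ℕ => c ↑i ≠ 0 ∧ i % 3 = r)).Nonempty →
          4 ≤ ((range (3 * p)).filter (fun i : ℕ => c ↑i ≠ 0 ∧ i % 3 = r)).card)
    (hB : ∀ r : ℕ, (∀ i ∈ (range (3 * p)).filter (fun i : ℕ => c ↑i ≠ 0), i % 3 = r) →
          ((range (3 * p)).filter (fun i : ℕ => c ↑i ≠ 0)).Nonempty →
          6 ≤ ((range (3 * p)).filter (fun i : ℕ => c ↑i ≠ 0)).card)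
    (hc : c ≠ 0) :
    6 ≤ hammingWt (3 * p) c ∧ 12 ≤ pairWt (3 * p) c := by
  have hnpos : 0 < 3 * p := by omega
  haveI : NeZero (3 * p) := ⟨by omega⟩
  set S := (range (3 * p)).filter (fun i : ℕ => c ↑i ≠ 0) with hS
  set S' := (range (3 * p)).filter (fun i : ℕ => c (↑i + 1) ≠ 0) with hS'
  set N := (range (3 * p)).filter (fun i : ℕ => c ↑i ≠ 0 ∨ c (↑i + 1) ≠ 0) with hN
  set A := (range (3 * p)).filter (fun i : ℕ => c ↑i ≠ 0 ∧ c (↑i + 1) ≠ 0) with hA'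
  set k : ℕ → ℕ := fun r => ((range (3 * p)).filter (fun i : ℕ => c ↑i ≠ 0 ∧ i % 3 = r)).card
    with hk
  have hcast : ∀ i : ℕ, ((((i + 1) % (3 * p) : ℕ)) : ZMod (3 * p)) = (↑i + 1 : ZMod (3 * p)) := by
    intro i; rw [ZMod.natCast_mod]; push_cast; ring
  have hwt : hammingWt (3 * p) c = S.card := rfl
  have hpw : pairWt (3 * p) c = N.card := by
    unfold pairWt
    rw [hN]
    congr 1
    apply Finset.filter_congr
    intro i _
    simp only [Ne, Prod.mk.injEq, not_and_or]
  have hSne : S.Nonempty := by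
    obtain ⟨z, hz⟩ : ∃ z, c z ≠ 0 := by
      by_contra hno; push_neg at hno
      exact hc (funext fun z => by simp [hno z])
    refine ⟨z.val, Finset.mem_filter.2 ⟨Finset.mem_range.2 (ZMod.val_lt z), ?_⟩⟩
    rwa [ZMod.natCast_zmod_val]
  have hsplit : S.card = k 0 + k 1 + k 2 := by
    have h1 : S.card = ∑ r ∈ range 3, (S.filter (fun i : ℕ => i % 3 = r)).card :=
      Finset.card_eq_sum_card_fiberwise (fun i _ => Finset.mem_range.2 (Nat.mod_lt _ (by norm_num)))
    have h2 : ∀ r, (S.filter (fun i : ℕ => i % 3 = r)).card = k r := by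
      intro r; rw [hS, Finset.filter_filter, hk]
    rw [h1, Finset.sum_range_succ, Finset.sum_range_succ, Finset.sum_range_one,
      h2 0, h2 1, h2 2]
  have hA4 : ∀ r, k r ≠ 0 → 4 ≤ k r := by
    intro r hr
    have h1 : 0 < k r := Nat.pos_of_ne_zero hr
    simp only [hk] at h1 ⊢
    exact hA r (Finset.card_pos.1 h1)
  have hmemS : ∀ i ∈ S, k (i % 3) ≠ 0 := by
    intro i hi
    have hmem : i ∈ (range (3 * p)).filter (fun j : ℕ => c ↑j ≠ 0 ∧ j % 3 = i % 3) := by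
      obtain ⟨h1, h2⟩ := Finset.mem_filter.1 hi
      exact Finset.mem_filter.2 ⟨h1, h2, rfl⟩
    simp only [hk]
    exact Finset.card_ne_zero_of_mem hmem
  have hclsA : ∀ i ∈ A, k (i % 3) ≠ 0 ∧ k ((i + 1) % 3) ≠ 0 := by
    intro i hi
    obtain ⟨h1, h2, h3⟩ := Finset.mem_filter.1 hi
    constructor
    · exact hmemS i (Finset.mem_filter.2 ⟨h1, h2⟩)
    · have hmem : (i + 1) % (3 * p) ∈ S := by
        refine Finset.mem_filter.2 ⟨Finset.mem_range.2 (Nat.mod_lt _ hnpos), ?_⟩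
        rw [hcast]; exact h3
      have hres := hmemS _ hmem
      rwa [Nat.mod_mod_of_dvd _ ⟨p, rfl⟩] at hres
  have hS'card : S'.card = S.card := by
    apply Finset.card_bij' (fun (i : ℕ) (_ : i ∈ S') => (i + 1) % (3 * p))
      (fun (b : ℕ) (_ : b ∈ S) => (b + (3 * p - 1)) % (3 * p))
    · intro a ha
      obtain ⟨h1, h2⟩ := Finset.mem_filter.1 ha
      refine Finset.mem_filter.2 ⟨Finset.mem_range.2 (Nat.mod_lt _ hnpos), ?_⟩
      rw [hcast]; exact h2
    · intro b hb
      obtain ⟨h1, h2⟩ := Finset.mem_filter.1 hb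
      refine Finset.mem_filter.2 ⟨Finset.mem_range.2 (Nat.mod_lt _ hnpos), ?_⟩
      have hcst : ((((b + (3 * p - 1)) % (3 * p) : ℕ)) : ZMod (3 * p)) + 1 = (b : ZMod (3 * p)) := by
        have hz : ((3 * p : ℕ) : ZMod (3 * p)) = 0 := ZMod.natCast_self _
        rw [ZMod.natCast_mod, Nat.cast_add, Nat.cast_sub (by omega : 1 ≤ 3 * p), hz, Nat.cast_one]
        ring
      rw [hcst]; exact h2
    · intro a ha
      have h1 : a < 3 * p := Finset.mem_range.1 (Finset.mem_filter.1 ha).1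
      rw [Nat.mod_add_mod, show a + 1 + (3 * p - 1) = a + 3 * p by omega, Nat.add_mod_right,
        Nat.mod_eq_of_lt h1]
    · intro b hb
      have h1 : b < 3 * p := Finset.mem_range.1 (Finset.mem_filter.1 hb).1
      rw [Nat.mod_add_mod, show b + (3 * p - 1) + 1 = b + 3 * p by omega, Nat.add_mod_right,
        Nat.mod_eq_of_lt h1]
  have hNA : N.card + A.card = S.card + S'.card := by
    rw [hN, hA', hS, hS', Finset.filter_or, Finset.filter_and]
    exact Finset.card_union_add_card_inter _ _
  have hSN : S.card ≤ N.card := Finset.card_le_card (by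
    intro x hx
    obtain ⟨h1, h2⟩ := Finset.mem_filter.1 hx
    exact Finset.mem_filter.2 ⟨h1, Or.inl h2⟩)
  have hsingle : ∀ r : ℕ, (∀ r' < 3, r' ≠ r → k r' = 0) → 6 ≤ S.card := by
    intro r hz
    refine hB r (fun i hi => ?_) hSne
    have h3 := hmemS i hi
    by_contra hne
    exact h3 (hz _ (Nat.mod_lt _ (by norm_num)) hne)
  have hAsub : ∀ t : ℕ, (∀ i ∈ A, i % 3 = t) → A.card ≤ k t := by
    intro t ht
    simp only [hk]
    apply Finset.card_le_card
    intro i hi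
    obtain ⟨h1, h2, h3⟩ := Finset.mem_filter.1 hi
    exact Finset.mem_filter.2 ⟨h1, h2, ht i hi⟩
  have hSposcard : 1 ≤ S.card := Finset.card_pos.2 hSne
  have hmod3 : ∀ i : ℕ, i % 3 = 0 ∨ i % 3 = 1 ∨ i % 3 = 2 := fun i => by omega
  rcases eq_or_ne (k 0) 0 with hk0 | hk0 <;>
  rcases eq_or_ne (k 1) 0 with hk1 | hk1 <;>
  rcases eq_or_ne (k 2) 0 with hk2 | hk2
  · omega
  -- only class 2
  · have h6 := hsingle 2 (by
      intro r' hlt hne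
      rcases (by omega : r' = 0 ∨ r' = 1 ∨ r' = 2) with rfl | rfl | rfl
      · exact hk0
      · exact hk1
      · exact absurd rfl hne)
    have hA0 : A.card = 0 := by
      rw [Finset.card_eq_zero, Finset.eq_empty_iff_forall_notMem]
      intro i hi
      obtain ⟨hx, hy⟩ := hclsA i hi
      rcases hmod3 i with h | h | h
      · rw [h] at hx; exact hx hk0
      · rw [h] at hx; exact hx hk1
      · rw [(by omega : (i + 1) % 3 = 0)] at hy; exact hy hk0
    exact ⟨by rw [hwt]; exact h6, by rw [hpw]; omega⟩
  -- only class 1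
  · have h6 := hsingle 1 (by
      intro r' hlt hne
      rcases (by omega : r' = 0 ∨ r' = 1 ∨ r' = 2) with rfl | rfl | rfl
      · exact hk0
      · exact absurd rfl hne
      · exact hk2)
    have hA0 : A.card = 0 := by
      rw [Finset.card_eq_zero, Finset.eq_empty_iff_forall_notMem]
      intro i hi
      obtain ⟨hx, hy⟩ := hclsA i hi
      rcases hmod3 i with h | h | h
      · rw [h] at hx; exact hx hk0
      · rw [(by omega : (i + 1) % 3 = 2)] at hy; exact hy hk2
      · rw [h] at hx; exact hx hk2
    exact ⟨by rw [hwt]; exact h6, by rw [hpw]; omega⟩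
  -- classes 1,2
  · have hAt : ∀ i ∈ A, i % 3 = 1 := by
      intro i hi
      obtain ⟨hx, hy⟩ := hclsA i hi
      rcases hmod3 i with h | h | h
      · rw [h] at hx; exact absurd hk0 hx
      · exact h
      · rw [(by omega : (i + 1) % 3 = 0)] at hy; exact absurd hk0 hy
    have hcard := hAsub 1 hAt
    have h41 := hA4 1 hk1
    have h42 := hA4 2 hk2
    exact ⟨by rw [hwt]; omega, by rw [hpw]; omega⟩
  -- only class 0
  · have h6 := hsingle 0 (by
      intro r' hlt hne
      rcases (by omega : r' = 0 ∨ r' = 1 ∨ r' = 2) with rfl | rfl | rfl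
      · exact absurd rfl hne
      · exact hk1
      · exact hk2)
    have hA0 : A.card = 0 := by
      rw [Finset.card_eq_zero, Finset.eq_empty_iff_forall_notMem]
      intro i hi
      obtain ⟨hx, hy⟩ := hclsA i hi
      rcases hmod3 i with h | h | h
      · rw [(by omega : (i + 1) % 3 = 1)] at hy; exact hy hk1
      · rw [h] at hx; exact hx hk1
      · rw [h] at hx; exact hx hk2
    exact ⟨by rw [hwt]; exact h6, by rw [hpw]; omega⟩
  -- classes 0,2
  · have hAt : ∀ i ∈ A, i % 3 = 2 := by
      intro i hi
      obtain ⟨hx, hy⟩ := hclsA i hi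
      rcases hmod3 i with h | h | h
      · rw [(by omega : (i + 1) % 3 = 1)] at hy; exact absurd hk1 hy
      · rw [h] at hx; exact absurd hk1 hx
      · exact h
    have hcard := hAsub 2 hAt
    have h40 := hA4 0 hk0
    have h42 := hA4 2 hk2
    exact ⟨by rw [hwt]; omega, by rw [hpw]; omega⟩
  -- classes 0,1
  · have hAt : ∀ i ∈ A, i % 3 = 0 := by
      intro i hi
      obtain ⟨hx, hy⟩ := hclsA i hi
      rcases hmod3 i with h | h | h
      · exact h
      · rw [(by omega : (i + 1) % 3 = 2)] at hy; exact absurd hk2 hy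
      · rw [h] at hx; exact absurd hk2 hx
    have hcard := hAsub 0 hAt
    have h40 := hA4 0 hk0
    have h41 := hA4 1 hk1
    exact ⟨by rw [hwt]; omega, by rw [hpw]; omega⟩
  -- all three classes
  · have h40 := hA4 0 hk0
    have h41 := hA4 1 hk1
    have h42 := hA4 2 hk2
    exact ⟨by rw [hwt]; omega, by rw [hpw]; omega⟩

lemma card_cyclicCode {F : Type*} [Field F] [Fintype F] {n d : ℕ} {g : F[X]}
    (hg : g.Monic) (hdeg : g.natDegree = d) (hdn : d < n) :
    Nat.card (cyclicCode n g) = Fintype.card F ^ (n - d) := by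
  haveI : NeZero n := ⟨by omega⟩
  haveI : NeZero (n - d) := ⟨by omega⟩
  have hnpos : 0 < n := by omega
  have hmpos : 0 < n - d := by omega
  have hgne : g ≠ 0 := hg.ne_zero
  -- degree facts
  have hmul_lt : ∀ Q : F[X], Q.degree < (n - d : ℕ) → (g * Q).degree < n := by
    intro Q hQ
    rcases eq_or_ne Q 0 with rfl | hQ0
    · rw [mul_zero, degree_zero]
      exact WithBot.bot_lt_coe _
    · have hne : g * Q ≠ 0 := mul_ne_zero hgne hQ0
      rw [← natDegree_lt_iff_degree_lt hne, natDegree_mul hgne hQ0, hdeg]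
      have := (natDegree_lt_iff_degree_lt hQ0).2 hQ
      omega
  -- the equivalence
  have hinv_mem : ∀ b : ZMod (n - d) → F,
      toPoly n (fun i => (g * toPoly (n - d) b).coeff i.val) = g * toPoly (n - d) b := by
    intro b
    exact toPoly_ofCoeff (hmul_lt _ (degree_toPoly_lt hmpos b))
  let e : cyclicCode n g ≃ (ZMod (n - d) → F) :=
    { toFun := fun c => fun k => ((toPoly n c.1) /ₘ g).coeff k.val
      invFun := fun b => ⟨fun i => (g * toPoly (n - d) b).coeff i.val, by
        show g ∣ _
        rw [hinv_mem b]
        exact Dvd.intro _ rfl⟩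
      left_inv := by
        rintro ⟨c, hc⟩
        have hdvd : g ∣ toPoly n c := hc
        have hmeq : g * (toPoly n c /ₘ g) = toPoly n c := by
          have h0 : toPoly n c %ₘ g = 0 := (modByMonic_eq_zero_iff_dvd hg).2 hdvd
          have := modByMonic_add_div (toPoly n c) g
          rw [h0, zero_add] at this
          exact this
        have hqdeg : (toPoly n c /ₘ g).degree < (n - d : ℕ) := by
          rcases eq_or_ne (toPoly n c /ₘ g) 0 with hq0 | hq0
          · rw [hq0, degree_zero]; exact WithBot.bot_lt_coe _
          · rw [← natDegree_lt_iff_degree_lt hq0]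
            have hPne : toPoly n c ≠ 0 := by
              intro h0
              exact hq0 (by rw [h0, Polynomial.zero_divByMonic])
            have h1 : (toPoly n c).natDegree = d + (toPoly n c /ₘ g).natDegree := by
              conv_lhs => rw [← hmeq]
              rw [natDegree_mul hgne hq0, hdeg]
            have h2 := natDegree_toPoly_lt hnpos c
            omega
        have hstep : toPoly (n - d) (fun k => (toPoly n c /ₘ g).coeff k.val)
            = toPoly n c /ₘ g := toPoly_ofCoeff hqdeg
        ext i
        show (g * toPoly (n - d) (fun k => (toPoly n c /ₘ g).coeff k.val)).coeff i.val = c i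
        rw [hstep, hmeq, coeff_toPoly, if_pos (ZMod.val_lt i), ZMod.natCast_zmod_val]
      right_inv := by
        intro b
        funext k
        show ((toPoly n (fun i => (g * toPoly (n - d) b).coeff i.val)) /ₘ g).coeff k.val = b k
        rw [hinv_mem b, mul_divByMonic_cancel_left _ hg, coeff_toPoly,
          if_pos (ZMod.val_lt k), ZMod.natCast_zmod_val] }
  rw [Nat.card_congr e, Nat.card_eq_fintype_card, Fintype.card_fun, ZMod.card]

section W
variable {p : ℕ} [hp : Fact p.Prime]

lemma coeff_iff (hp7 : 7 ≤ p) (m : ℕ) :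
    ((X ^ 3 - 1 : (ZMod p)[X]) ^ 5).coeff m ≠ 0 ↔
      (m = 0 ∨ m = 3 ∨ m = 6 ∨ m = 9 ∨ m = 12 ∨ m = 15) := by
  have hQC : (X ^ 3 - 1 : (ZMod p)[X]) ^ 5
      = C 1 * X ^ 15 - C 5 * X ^ 12 + C 10 * X ^ 9 - C 10 * X ^ 6 + C 5 * X ^ 3 - C 1 := by
    simp only [map_one, map_ofNat]
    ring
  have h5 : (5 : ZMod p) ≠ 0 := by
    have : ((5 : ℕ) : ZMod p) ≠ 0 := by
      rw [Ne, ZMod.natCast_eq_zero_iff]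
      intro hdvd
      have := Nat.le_of_dvd (by norm_num) hdvd
      omega
    simpa using this
  have h10 : (10 : ZMod p) ≠ 0 := by
    have : ((10 : ℕ) : ZMod p) ≠ 0 := by
      rw [Ne, ZMod.natCast_eq_zero_iff]
      intro hdvd
      have hle := Nat.le_of_dvd (by norm_num) hdvd
      interval_cases p <;> first | (revert hdvd; decide) | (exact absurd hp.out (by norm_num))
    simpa using this
  have h1 : (1 : ZMod p) ≠ 0 := one_ne_zero
  rw [hQC]
  simp only [coeff_sub, coeff_add, coeff_C_mul, coeff_X_pow, coeff_C]
  constructor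
  · intro hne
    by_contra hnot
    push_neg at hnot
    obtain ⟨e0, e3, e6, e9, e12, e15⟩ := hnot
    apply hne
    rw [if_neg (by omega), if_neg (by omega), if_neg (by omega), if_neg (by omega),
      if_neg (by omega), if_neg (by omega)]
    ring
  · rintro (rfl | rfl | rfl | rfl | rfl | rfl) <;> simp [h5, h10]
end W

section W2
variable {p : ℕ} [hp : Fact p.Prime]

lemma witness_hamming (hp7 : 7 ≤ p) :
    hammingWt (3 * p) (fun i : ZMod (3 * p) => ((X ^ 3 - 1 : (ZMod p)[X]) ^ 5).coeff i.val) = 6 := by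
  haveI : NeZero (3 * p) := ⟨by omega⟩
  have hval : ∀ i : ℕ, i < 3 * p → ((i : ZMod (3 * p))).val = i := fun i hi => by
    rw [ZMod.val_natCast, Nat.mod_eq_of_lt hi]
  unfold hammingWt
  have hfe : (range (3 * p)).filter
        (fun i : ℕ => ((X ^ 3 - 1 : (ZMod p)[X]) ^ 5).coeff ((i : ZMod (3 * p))).val ≠ 0)
      = ({0, 3, 6, 9, 12, 15} : Finset ℕ) := by
    ext m
    simp only [Finset.mem_filter, Finset.mem_range, Finset.mem_insert, Finset.mem_singleton]
    constructor
    · rintro ⟨hm, hne⟩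
      rw [hval m hm] at hne
      exact (coeff_iff hp7 m).1 hne
    · intro hm
      have hmlt : m < 3 * p := by omega
      refine ⟨hmlt, ?_⟩
      rw [hval m hmlt]
      exact (coeff_iff hp7 m).2 hm
  rw [hfe]
  decide

lemma witness_pair (hp7 : 7 ≤ p) :
    pairWt (3 * p) (fun i : ZMod (3 * p) => ((X ^ 3 - 1 : (ZMod p)[X]) ^ 5).coeff i.val) = 12 := by
  haveI : NeZero (3 * p) := ⟨by omega⟩
  have hval : ∀ i : ℕ, i < 3 * p → ((i : ZMod (3 * p))).val = i := fun i hi => by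
    rw [ZMod.val_natCast, Nat.mod_eq_of_lt hi]
  have hc1 : ∀ i : ℕ, ((i : ZMod (3 * p)) + 1).val = (i + 1) % (3 * p) := by
    intro i
    rw [show ((i : ZMod (3 * p)) + 1) = ((i + 1 : ℕ) : ZMod (3 * p)) by push_cast; ring,
      ZMod.val_natCast]
  unfold pairWt
  have hfe : (range (3 * p)).filter
        (fun i : ℕ => (((X ^ 3 - 1 : (ZMod p)[X]) ^ 5).coeff ((i : ZMod (3 * p))).val,
            ((X ^ 3 - 1 : (ZMod p)[X]) ^ 5).coeff (((i : ZMod (3 * p)) + 1)).val)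
          ≠ ((0 : ZMod p), (0 : ZMod p)))
      = insert (3 * p - 1) ({0, 2, 3, 5, 6, 8, 9, 11, 12, 14, 15} : Finset ℕ) := by
    ext m
    simp only [Finset.mem_filter, Finset.mem_range, Finset.mem_insert, Finset.mem_singleton,
      Ne, Prod.mk.injEq, not_and_or]
    constructor
    · rintro ⟨hm, hor⟩
      rcases eq_or_ne m (3 * p - 1) with rfl | hne
      · exact Or.inl rfl
      · right
        rw [hval m hm, hc1 m, Nat.mod_eq_of_lt (by omega : m + 1 < 3 * p)] at hor
        rcases hor with h | h
        · have := (coeff_iff hp7 m).1 h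
          omega
        · have := (coeff_iff hp7 (m + 1)).1 h
          omega
    · rintro (rfl | hm)
      · refine ⟨by omega, ?_⟩
        right
        rw [hc1, show 3 * p - 1 + 1 = 3 * p by omega, Nat.mod_self]
        exact (coeff_iff hp7 0).2 (by omega)
      · have hmlt : m < 3 * p := by omega
        refine ⟨hmlt, ?_⟩
        rw [hval m hmlt, hc1 m, Nat.mod_eq_of_lt (by omega : m + 1 < 3 * p)]
        rcases hm with rfl | rfl | rfl | rfl | rfl | rfl | rfl | rfl | rfl | rfl | rfl <;>
          first
            | exact Or.inl ((coeff_iff hp7 _).2 (by omega))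
            | exact Or.inr ((coeff_iff hp7 _).2 (by omega))
  rw [hfe]
  rw [Finset.card_insert_of_notMem (by simp; omega)]
  decide
end W2



theorem stmt_15 (p : ℕ) [hp : Fact p.Prime] (hdvd : 3 ∣ p - 1)
    (ω : ZMod p) (hω : IsPrimitiveRoot ω 3) :
    Nat.card (cyclicCode (3 * p)
        ((X - 1) ^ 5 * (X - Polynomial.C ω) ^ 3 * (X - Polynomial.C (ω ^ 2)) ^ 3 : (ZMod p)[X]))
      = p ^ (3 * p - 11) ∧
    (∃ c ∈ cyclicCode (3 * p)
        ((X - 1) ^ 5 * (X - Polynomial.C ω) ^ 3 * (X - Polynomial.C (ω ^ 2)) ^ 3 : (ZMod p)[X]),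
      c ≠ 0 ∧ hammingWt (3 * p) c = 6) ∧
    (∀ c ∈ cyclicCode (3 * p)
        ((X - 1) ^ 5 * (X - Polynomial.C ω) ^ 3 * (X - Polynomial.C (ω ^ 2)) ^ 3 : (ZMod p)[X]),
      c ≠ 0 → 6 ≤ hammingWt (3 * p) c) ∧
    (∃ c ∈ cyclicCode (3 * p)
        ((X - 1) ^ 5 * (X - Polynomial.C ω) ^ 3 * (X - Polynomial.C (ω ^ 2)) ^ 3 : (ZMod p)[X]),
      c ≠ 0 ∧ pairWt (3 * p) c = 12) ∧
    (∀ c ∈ cyclicCode (3 * p)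
        ((X - 1) ^ 5 * (X - Polynomial.C ω) ^ 3 * (X - Polynomial.C (ω ^ 2)) ^ 3 : (ZMod p)[X]),
      c ≠ 0 → 12 ≤ pairWt (3 * p) c) := by
  have hp7 : 7 ≤ p := by
    by_contra hlt
    push_neg at hlt
    have h2 := hp.out.two_le
    interval_cases p <;>
      first
        | (revert hdvd; decide)
        | (exact absurd hp.out (by norm_num))
  have hp3 : p ≠ 3 := by omega
  have hppos : 0 < p := by omega
  haveI : NeZero (3 * p) := ⟨by omega⟩
  have hω3 : ω ^ 3 = 1 := hω.pow_eq_one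
  have hωne : ω ≠ 1 := hω.ne_one (by norm_num)
  have hωsum : 1 + ω + ω ^ 2 = 0 := by
    have hfac : (ω - 1) * (1 + ω + ω ^ 2) = 0 := by linear_combination hω3
    exact (mul_eq_zero.1 hfac).resolve_left (sub_ne_zero.2 hωne)
  have h3F : (3 : ZMod p) ≠ 0 := by
    have h3n : ((3 : ℕ) : ZMod p) ≠ 0 := by
      rw [Ne, ZMod.natCast_eq_zero_iff]
      intro hdvd3
      have := Nat.le_of_dvd (by norm_num) hdvd3
      omega
    simpa using h3n
  set g : (ZMod p)[X] :=
    (X - 1) ^ 5 * (X - Polynomial.C ω) ^ 3 * (X - Polynomial.C (ω ^ 2)) ^ 3 with hgdef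
  have hg1 : (X - 1 : (ZMod p)[X]) = X - C 1 := by rw [map_one]
  have hgm1 : ((X - 1 : (ZMod p)[X]) ^ 5).Monic := by
    rw [hg1]; exact (monic_X_sub_C _).pow 5
  have hgmonic : g.Monic := by
    rw [hgdef]
    exact (hgm1.mul ((monic_X_sub_C _).pow 3)).mul ((monic_X_sub_C _).pow 3)
  have hXdeg1 : (X - 1 : (ZMod p)[X]).natDegree = 1 := by
    rw [hg1]; exact natDegree_X_sub_C 1
  have hgdeg : g.natDegree = 11 := by
    rw [hgdef,
      Monic.natDegree_mul (hgm1.mul ((monic_X_sub_C _).pow 3)) ((monic_X_sub_C _).pow 3),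
      Monic.natDegree_mul hgm1 ((monic_X_sub_C _).pow 3),
      natDegree_pow, natDegree_pow, natDegree_pow, hXdeg1, natDegree_X_sub_C,
      natDegree_X_sub_C]
  have hdvd1 : (X - C (1 : ZMod p)) ^ 5 ∣ g := by
    rw [hgdef, hg1]; exact dvd_mul_of_dvd_left (dvd_mul_right _ _) _
  have hdvdw : (X - C ω) ^ 3 ∣ g := by
    rw [hgdef]; exact dvd_mul_of_dvd_left (dvd_mul_left _ _) _
  have hdvdw2 : (X - C (ω ^ 2)) ^ 3 ∣ g := by
    rw [hgdef]; exact dvd_mul_left _ _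
  have hs' : (1 : (ZMod p)[X]) + C ω + (C ω) ^ 2 = 0 := by
    have h := congrArg (C : ZMod p →+* (ZMod p)[X]) hωsum
    simpa [map_add, map_pow, map_one] using h
  have hc' : (C ω : (ZMod p)[X]) ^ 3 = 1 := by
    have h := congrArg (C : ZMod p →+* (ZMod p)[X]) hω3
    simpa [map_pow, map_one] using h
  have hXc : (X ^ 3 - 1 : (ZMod p)[X]) = (X - 1) * (X - C ω) * (X - C (ω ^ 2)) := by
    have hCsq : (C (ω ^ 2) : (ZMod p)[X]) = (C ω) ^ 2 := by rw [map_pow]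
    rw [hCsq]
    linear_combination (X ^ 2 - X) * hs' + ((1 : (ZMod p)[X]) - X) * hc'
  -- witness
  have hQdeg : ((X ^ 3 - 1 : (ZMod p)[X]) ^ 5).degree < (3 * p : ℕ) := by
    have h1 : ((X ^ 3 - 1 : (ZMod p)[X]) ^ 5).natDegree ≤ 15 := by
      refine le_trans natDegree_pow_le ?_
      have h2 : (X ^ 3 - 1 : (ZMod p)[X]).natDegree ≤ 3 := by
        rw [show (1 : (ZMod p)[X]) = C 1 by rw [map_one], natDegree_X_pow_sub_C]
      omega
    calc ((X ^ 3 - 1 : (ZMod p)[X]) ^ 5).degree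
        ≤ (((X ^ 3 - 1 : (ZMod p)[X]) ^ 5).natDegree : WithBot ℕ) := degree_le_natDegree
      _ < ((3 * p : ℕ) : WithBot ℕ) := by
          exact_mod_cast (by omega : ((X ^ 3 - 1 : (ZMod p)[X]) ^ 5).natDegree < 3 * p)
  have htp : toPoly (3 * p) (fun i : ZMod (3 * p) => ((X ^ 3 - 1 : (ZMod p)[X]) ^ 5).coeff i.val)
      = (X ^ 3 - 1 : (ZMod p)[X]) ^ 5 := toPoly_ofCoeff hQdeg
  have hmem : (fun i : ZMod (3 * p) => ((X ^ 3 - 1 : (ZMod p)[X]) ^ 5).coeff i.val)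
      ∈ cyclicCode (3 * p) g := by
    show g ∣ _
    rw [htp, hXc, mul_pow, mul_pow, hgdef]
    exact mul_dvd_mul (mul_dvd_mul dvd_rfl (pow_dvd_pow _ (by norm_num)))
      (pow_dvd_pow _ (by norm_num))
  have hc0ne : (fun i : ZMod (3 * p) => ((X ^ 3 - 1 : (ZMod p)[X]) ^ 5).coeff i.val)
      ≠ (0 : ZMod (3 * p) → ZMod p) := by
    intro h0
    have h1 := congrFun h0 0
    rw [ZMod.val_zero] at h1
    exact (coeff_iff hp7 0).2 (Or.inl rfl) h1
  have hlower : ∀ c ∈ cyclicCode (3 * p) g, c ≠ 0 →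
      6 ≤ hammingWt (3 * p) c ∧ 12 ≤ pairWt (3 * p) c := by
    intro c hcmem hcne
    have hdv : g ∣ toPoly (3 * p) c := hcmem
    have h1 : (X - C (1 : ZMod p)) ^ 5 ∣ toPoly (3 * p) c := dvd_trans hdvd1 hdv
    have hw : (X - C ω) ^ 3 ∣ toPoly (3 * p) c := dvd_trans hdvdw hdv
    have hw2 : (X - C (ω ^ 2)) ^ 3 ∣ toPoly (3 * p) c := dvd_trans hdvdw2 hdv
    exact weights_ge hppos
      (fun r hne => class_card_ge hp3 hω3 hωsum h3F h1 hw hw2 r hne)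
      (fun r hall hne => six_le_of_single_class hp3 h1 r hall hne)
      hcne
  refine ⟨?_, ⟨_, hmem, hc0ne, witness_hamming hp7⟩,
    (fun c hc hne => (hlower c hc hne).1),
    ⟨_, hmem, hc0ne, witness_pair hp7⟩,
    (fun c hc hne => (hlower c hc hne).2)⟩
  rw [card_cyclicCode hgmonic hgdeg (by omega : 11 < 3 * p), ZMod.card]
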